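/- (Error bound with partial participation and federated policy evaluation.) With selected client set C and normalized weights q'_m, suppose all selected clients improve their policies against the common value estimate V̄^t (with ‖V̄^t‖_∞ ≤ R_max/(1−γ)): ‖T^{π^{t+1}_m}_m V̄^t − T_m V̄^t‖_∞ ≤ ε_m, and π^{t+1} = ∑_{m∈C} q'_m π^{t+1}_m. Then ‖T^{π^{t+1}}_I V̄^t − T_I V̄^t‖_∞ ≤ ∑_{m∈C} ∑_{n=1}^N q'_m q_n γ R_max κ_{m,n}/(1−γ) + ∑_{m∈C} q'_m γ R_max κ_{m,I}/(1−γ) + ∑_{m∈C} q'_m ε_m. -/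
import Mathlib


open Finset Filter

variable {S A : Type*}

/-- A stochastic policy: for each state, a probability distribution over actions. -/
def IsPolicy [Fintype A] (pi : S → A → ℝ) : Prop :=
  (∀ s a, 0 ≤ pi s a) ∧ ∀ s, ∑ a, pi s a = 1

/-- A transition kernel: for each state-action pair, a probability distribution over states. -/
def IsKernel [Fintype S] (P : S → A → S → ℝ) : Prop :=
  (∀ s a s', 0 ≤ P s a s') ∧ ∀ s a, ∑ s', P s a s' = 1

/-- The policy Bellman operator `T^π` for kernel `P`. -/
def Tpol [Fintype S] [Fintype A] (γ : ℝ) (R : S → A → ℝ) (P : S → A → S → ℝ)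
    (pi : S → A → ℝ) (V : S → ℝ) (s : S) : ℝ :=
  ∑ a, pi s a * (R s a + γ * ∑ s', P s a s' * V s')

/-- The Bellman optimality operator `T` for kernel `P`. -/
noncomputable def Topt [Fintype S] [Fintype A] [Nonempty A] (γ : ℝ) (R : S → A → ℝ)
    (P : S → A → S → ℝ) (V : S → ℝ) (s : S) : ℝ :=
  Finset.univ.sup' Finset.univ_nonempty fun a => R s a + γ * ∑ s', P s a s' * V s'

/-- Heterogeneity measure `κ_{m,n}`: the supremum over policies `π` and states `s` of the
ℓ¹-distance between the induced state transition kernels `P_m^π(·|s)` and `P_n^π(·|s)`. -/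
noncomputable def kappa [Fintype S] [Fintype A] (Pm Pn : S → A → S → ℝ) : ℝ :=
  sSup {x : ℝ | ∃ pi : S → A → ℝ, ∃ s : S, IsPolicy pi ∧
    x = ∑ s', |(∑ a, pi s a * Pm s a s') - ∑ a, pi s a * Pn s a s'|}

/-- Sup-norm of a value function on a finite state space. -/
noncomputable def supNorm [Fintype S] [Nonempty S] (V : S → ℝ) : ℝ := ⨆ s, |V s|

variable [Fintype S] [Fintype A] [Nonempty S] [Nonempty A]

lemma le_supNorm' (V : S → ℝ) (s : S) : |V s| ≤ supNorm V := by
  unfold supNorm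
  exact le_ciSup (Set.Finite.bddAbove (Set.finite_range fun s => |V s|)) s

lemma supNorm_le' {V : S → ℝ} {c : ℝ} (h : ∀ s, |V s| ≤ c) : supNorm V ≤ c := by
  unfold supNorm
  exact ciSup_le h

lemma Tpol_eq (γ : ℝ) (R : S → A → ℝ) (P : S → A → S → ℝ) (pi : S → A → ℝ)
    (V : S → ℝ) (s : S) :
    Tpol γ R P pi V s
      = (∑ a, pi s a * R s a) + γ * ∑ s', (∑ a, pi s a * P s a s') * V s' := by
  calc Tpol γ R P pi V s
      = ∑ a, (pi s a * R s a + γ * ∑ s', pi s a * P s a s' * V s') := by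
        refine Finset.sum_congr rfl fun a _ => ?_
        rw [mul_add, mul_left_comm, Finset.mul_sum]
        simp [mul_assoc]
    _ = (∑ a, pi s a * R s a) + ∑ a, γ * ∑ s', pi s a * P s a s' * V s' :=
        Finset.sum_add_distrib
    _ = (∑ a, pi s a * R s a) + γ * ∑ s', (∑ a, pi s a * P s a s') * V s' := by
        rw [← Finset.mul_sum, Finset.sum_comm]
        congr 1
        refine congrArg _ (Finset.sum_congr rfl fun s' _ => ?_)
        rw [Finset.sum_mul]

lemma policy_kernel_sum {pi : S → A → ℝ} (hpi : IsPolicy pi) {P : S → A → S → ℝ}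
    (hP : IsKernel P) (s : S) : ∑ s', ∑ a, pi s a * P s a s' = 1 := by
  rw [Finset.sum_comm]
  have : ∀ a, ∑ s', pi s a * P s a s' = pi s a := by
    intro a; rw [← Finset.mul_sum, hP.2 s a, mul_one]
  rw [Finset.sum_congr rfl fun a _ => this a, hpi.2 s]

lemma kappa_bdd {Pm Pn : S → A → S → ℝ} (hm : IsKernel Pm) (hn : IsKernel Pn) :
    BddAbove {x : ℝ | ∃ pi : S → A → ℝ, ∃ s : S, IsPolicy pi ∧
      x = ∑ s', |(∑ a, pi s a * Pm s a s') - ∑ a, pi s a * Pn s a s'|} := by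
  refine ⟨2, ?_⟩
  rintro x ⟨pi, s, hpi, rfl⟩
  calc ∑ s', |(∑ a, pi s a * Pm s a s') - ∑ a, pi s a * Pn s a s'|
      ≤ ∑ s', ((∑ a, pi s a * Pm s a s') + ∑ a, pi s a * Pn s a s') := by
        refine Finset.sum_le_sum fun s' _ => ?_
        have h1 : (0:ℝ) ≤ ∑ a, pi s a * Pm s a s' :=
          Finset.sum_nonneg fun a _ => mul_nonneg (hpi.1 s a) (hm.1 s a s')
        have h2 : (0:ℝ) ≤ ∑ a, pi s a * Pn s a s' :=
          Finset.sum_nonneg fun a _ => mul_nonneg (hpi.1 s a) (hn.1 s a s')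
        calc |(∑ a, pi s a * Pm s a s') - ∑ a, pi s a * Pn s a s'|
            ≤ |∑ a, pi s a * Pm s a s'| + |∑ a, pi s a * Pn s a s'| := abs_sub _ _
          _ = (∑ a, pi s a * Pm s a s') + ∑ a, pi s a * Pn s a s' := by
              rw [abs_of_nonneg h1, abs_of_nonneg h2]
    _ = 2 := by
        rw [Finset.sum_add_distrib, policy_kernel_sum hpi hm, policy_kernel_sum hpi hn]
        norm_num

lemma le_kappa {Pm Pn : S → A → S → ℝ} (hm : IsKernel Pm) (hn : IsKernel Pn)
    {pi : S → A → ℝ} (hpi : IsPolicy pi) (s : S) :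
    ∑ s', |(∑ a, pi s a * Pm s a s') - ∑ a, pi s a * Pn s a s'| ≤ kappa Pm Pn :=
  le_csSup (kappa_bdd hm hn) ⟨pi, s, hpi, rfl⟩

lemma key_bound {c : ℝ} (hc : 0 ≤ c) {Pm Pn : S → A → S → ℝ}
    (hm : IsKernel Pm) (hn : IsKernel Pn) {pi : S → A → ℝ} (hpi : IsPolicy pi)
    {V : S → ℝ} (hV : ∀ s', |V s'| ≤ c) (s : S) :
    |(∑ s', (∑ a, pi s a * Pm s a s') * V s') - ∑ s', (∑ a, pi s a * Pn s a s') * V s'|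
      ≤ c * kappa Pm Pn := by
  rw [← Finset.sum_sub_distrib]
  simp only [← sub_mul]
  refine (Finset.abs_sum_le_sum_abs _ _).trans ?_
  have h1 : ∑ s', |((∑ a, pi s a * Pm s a s') - ∑ a, pi s a * Pn s a s') * V s'|
      ≤ ∑ s', |(∑ a, pi s a * Pm s a s') - ∑ a, pi s a * Pn s a s'| * c := by
    refine Finset.sum_le_sum fun s' _ => ?_
    rw [abs_mul]
    exact mul_le_mul_of_nonneg_left (hV s') (abs_nonneg _)
  refine h1.trans ?_
  rw [← Finset.sum_mul, mul_comm]
  exact mul_le_mul_of_nonneg_left (le_kappa hm hn hpi s) hc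

lemma det_policy [DecidableEq A] (a : A) :
    IsPolicy (fun (_ : S) (a' : A) => if a' = a then (1:ℝ) else 0) :=
  ⟨fun _ a' => by by_cases h : a' = a <;> simp [h], fun _ => by simp⟩

lemma key_bound' [DecidableEq A] {c : ℝ} (hc : 0 ≤ c) {Pm Pn : S → A → S → ℝ}
    (hm : IsKernel Pm) (hn : IsKernel Pn) {V : S → ℝ} (hV : ∀ s', |V s'| ≤ c)
    (s : S) (a : A) :
    |(∑ s', Pm s a s' * V s') - ∑ s', Pn s a s' * V s'| ≤ c * kappa Pm Pn := by
  have h := key_bound hc hm hn (det_policy (S := S) a) hV s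
  have hd : ∀ (P : S → A → S → ℝ) (s' : S),
      ∑ a', (if a' = a then (1:ℝ) else 0) * P s a' s' = P s a s' := by
    intro P s'; simp [ite_mul]
  simpa only [hd] using h

lemma abs_sup'_sub_sup'_le {ι : Type*} {t : Finset ι} (ht : t.Nonempty)
    (f g : ι → ℝ) {c : ℝ} (h : ∀ a ∈ t, |f a - g a| ≤ c) :
    |t.sup' ht f - t.sup' ht g| ≤ c := by
  rw [abs_sub_le_iff]
  constructor
  · rw [sub_le_iff_le_add]
    refine Finset.sup'_le ht f fun a ha => ?_
    have h1 := (abs_le.mp (h a ha)).2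
    have h2 : g a ≤ t.sup' ht g := Finset.le_sup' g ha
    linarith
  · rw [sub_le_iff_le_add]
    refine Finset.sup'_le ht g fun a ha => ?_
    have h1 := (abs_le.mp (h a ha)).1
    have h2 : f a ≤ t.sup' ht f := Finset.le_sup' f ha
    linarith

theorem stmt11 (N : ℕ) (γ Rmax : ℝ) (hγ0 : 0 < γ) (hγ1 : γ < 1)
    (R : S → A → ℝ) (hR : ∀ s a, 0 ≤ R s a ∧ R s a ≤ Rmax)
    (q : Fin N → ℝ) (hq0 : ∀ n, 0 ≤ q n) (hq1 : ∑ n, q n = 1)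
    (P : Fin N → S → A → S → ℝ) (hP : ∀ n, IsKernel (P n))
    (Pbar : S → A → S → ℝ) (hPbar : ∀ s a s', Pbar s a s' = ∑ j, q j * P j s a s')
    (C : Finset (Fin N)) (hC : 0 < ∑ m ∈ C, q m)
    (Vbar : S → ℝ) (hVbar : supNorm Vbar ≤ Rmax / (1 - γ))
    (pinext : Fin N → S → A → ℝ) (hpinext : ∀ n, IsPolicy (pinext n))
    (ε : Fin N → ℝ)
    (hε : ∀ m ∈ C, supNorm (fun s => Tpol γ R (P m) (pinext m) Vbar s - Topt γ R (P m) Vbar s) ≤ ε m)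
    (piagg : S → A → ℝ)
    (hpiagg : ∀ s a, piagg s a = ∑ m ∈ C, (q m / ∑ k ∈ C, q k) * pinext m s a) :
    supNorm (fun s => Tpol γ R Pbar piagg Vbar s - Topt γ R Pbar Vbar s) ≤
      (∑ m ∈ C, ∑ n, (q m / ∑ k ∈ C, q k) * q n * (γ * Rmax * kappa (P m) (P n) / (1 - γ))) +
        (∑ m ∈ C, (q m / ∑ k ∈ C, q k) * (γ * Rmax * kappa (P m) Pbar / (1 - γ))) +
        ∑ m ∈ C, (q m / ∑ k ∈ C, q k) * ε m := by
  classical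
  obtain ⟨s0⟩ := ‹Nonempty S›
  obtain ⟨a0⟩ := ‹Nonempty A›
  set Q : ℝ := ∑ k ∈ C, q k with hQdef
  have hQ : 0 < Q := hC
  set q' : Fin N → ℝ := fun m => q m / Q with hq'def
  have hq'0 : ∀ m, 0 ≤ q' m := fun m => div_nonneg (hq0 m) hQ.le
  have hq'1 : ∑ m ∈ C, q' m = 1 := by
    simp only [hq'def]; rw [← Finset.sum_div]; exact div_self hQ.ne'
  have h1γ : (0:ℝ) < 1 - γ := by linarith
  have hRmax : 0 ≤ Rmax := le_trans (hR s0 a0).1 (hR s0 a0).2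
  have hc0 : 0 ≤ Rmax / (1 - γ) := div_nonneg hRmax h1γ.le
  have hV : ∀ s', |Vbar s'| ≤ Rmax / (1 - γ) := fun s' => (le_supNorm' Vbar s').trans hVbar
  have hPbarK : IsKernel Pbar := by
    constructor
    · intro s a s'; rw [hPbar]
      exact Finset.sum_nonneg fun j _ => mul_nonneg (hq0 j) ((hP j).1 s a s')
    · intro s a
      have : ∀ s', Pbar s a s' = ∑ j, q j * P j s a s' := fun s' => hPbar s a s'
      rw [Finset.sum_congr rfl fun s' _ => this s', Finset.sum_comm]
      have : ∀ j, ∑ s', q j * P j s a s' = q j := by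
        intro j; rw [← Finset.mul_sum, (hP j).2 s a, mul_one]
      rw [Finset.sum_congr rfl fun j _ => this j, hq1]
  set c : Fin N → ℝ := fun m =>
    (∑ n, q n * (γ * Rmax * kappa (P m) (P n) / (1 - γ))) +
      γ * Rmax * kappa (P m) Pbar / (1 - γ) + ε m with hcdef
  -- per-client bound
  have hmain : ∀ s : S, ∀ m ∈ C,
      |Tpol γ R Pbar (pinext m) Vbar s - Topt γ R Pbar Vbar s| ≤ c m := by
    intro s m hm
    have hA : |Tpol γ R Pbar (pinext m) Vbar s - Tpol γ R (P m) (pinext m) Vbar s|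
        ≤ γ * (Rmax / (1 - γ) * kappa (P m) Pbar) := by
      have h1 : Tpol γ R Pbar (pinext m) Vbar s - Tpol γ R (P m) (pinext m) Vbar s
          = γ * ((∑ s', (∑ a, pinext m s a * Pbar s a s') * Vbar s')
              - ∑ s', (∑ a, pinext m s a * P m s a s') * Vbar s') := by
        rw [Tpol_eq, Tpol_eq]; ring
      rw [h1, abs_mul, abs_of_pos hγ0, abs_sub_comm]
      exact mul_le_mul_of_nonneg_left
        (key_bound hc0 (hP m) hPbarK (hpinext m) hV s) hγ0.le
    have hB : |Tpol γ R (P m) (pinext m) Vbar s - Topt γ R (P m) Vbar s| ≤ ε m :=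
      le_trans (le_supNorm' (fun s => Tpol γ R (P m) (pinext m) Vbar s - Topt γ R (P m) Vbar s) s)
        (hε m hm)
    have hCm : |Topt γ R (P m) Vbar s - Topt γ R Pbar Vbar s|
        ≤ γ * ∑ n, q n * (Rmax / (1 - γ) * kappa (P m) (P n)) := by
      refine abs_sup'_sub_sup'_le _ _ _ fun a _ => ?_
      have e1 : ∑ s', Pbar s a s' * Vbar s' = ∑ n, q n * ∑ s', P n s a s' * Vbar s' := by
        calc ∑ s', Pbar s a s' * Vbar s'
            = ∑ s', ∑ j, q j * P j s a s' * Vbar s' := by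
              refine Finset.sum_congr rfl fun s' _ => ?_
              rw [hPbar, Finset.sum_mul]
          _ = ∑ j, ∑ s', q j * P j s a s' * Vbar s' := Finset.sum_comm
          _ = ∑ n, q n * ∑ s', P n s a s' * Vbar s' := by
              refine Finset.sum_congr rfl fun j _ => ?_
              rw [Finset.mul_sum]
              exact Finset.sum_congr rfl fun s' _ => by ring
      have h2 : (R s a + γ * ∑ s', P m s a s' * Vbar s')
            - (R s a + γ * ∑ s', Pbar s a s' * Vbar s')
          = γ * ∑ n, q n * ((∑ s', P m s a s' * Vbar s') - ∑ s', P n s a s' * Vbar s') := by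
        have e3 : ∑ n, q n * ((∑ s', P m s a s' * Vbar s') - ∑ s', P n s a s' * Vbar s')
            = (∑ s', P m s a s' * Vbar s') - ∑ n, q n * ∑ s', P n s a s' * Vbar s' := by
          simp only [mul_sub]
          rw [Finset.sum_sub_distrib, ← Finset.sum_mul, hq1, one_mul]
        rw [e3, e1]; ring
      rw [h2, abs_mul, abs_of_pos hγ0]
      refine mul_le_mul_of_nonneg_left ?_ hγ0.le
      refine (Finset.abs_sum_le_sum_abs _ _).trans (Finset.sum_le_sum fun n _ => ?_)
      rw [abs_mul, abs_of_nonneg (hq0 n)]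
      exact mul_le_mul_of_nonneg_left (key_bound' hc0 (hP m) (hP n) hV s a) (hq0 n)
    have tri : Tpol γ R Pbar (pinext m) Vbar s - Topt γ R Pbar Vbar s
        = (Tpol γ R Pbar (pinext m) Vbar s - Tpol γ R (P m) (pinext m) Vbar s)
          + (Tpol γ R (P m) (pinext m) Vbar s - Topt γ R (P m) Vbar s)
          + (Topt γ R (P m) Vbar s - Topt γ R Pbar Vbar s) := by ring
    have habs := abs_add_three
      (Tpol γ R Pbar (pinext m) Vbar s - Tpol γ R (P m) (pinext m) Vbar s)
      (Tpol γ R (P m) (pinext m) Vbar s - Topt γ R (P m) Vbar s)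
      (Topt γ R (P m) Vbar s - Topt γ R Pbar Vbar s)
    rw [← tri] at habs
    have e4 : γ * ∑ n, q n * (Rmax / (1 - γ) * kappa (P m) (P n))
        = ∑ n, q n * (γ * Rmax * kappa (P m) (P n) / (1 - γ)) := by
      rw [Finset.mul_sum]
      exact Finset.sum_congr rfl fun n _ => by ring
    have e5 : γ * (Rmax / (1 - γ) * kappa (P m) Pbar)
        = γ * Rmax * kappa (P m) Pbar / (1 - γ) := by ring
    simp only [hcdef]
    rw [← e4, ← e5]
    linarith [habs.trans (by linarith : _ ≤ γ * (Rmax / (1 - γ) * kappa (P m) Pbar) + ε m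
      + γ * ∑ n, q n * (Rmax / (1 - γ) * kappa (P m) (P n)))]
  -- decomposition of the aggregated difference
  have hdecomp : ∀ s : S, Tpol γ R Pbar piagg Vbar s - Topt γ R Pbar Vbar s
      = ∑ m ∈ C, q' m * (Tpol γ R Pbar (pinext m) Vbar s - Topt γ R Pbar Vbar s) := by
    intro s
    have h1 : Tpol γ R Pbar piagg Vbar s
        = ∑ m ∈ C, q' m * Tpol γ R Pbar (pinext m) Vbar s := by
      unfold Tpol
      calc ∑ a, piagg s a * (R s a + γ * ∑ s', Pbar s a s' * Vbar s')
          = ∑ a, ∑ m ∈ C, q' m * pinext m s a * (R s a + γ * ∑ s', Pbar s a s' * Vbar s') := by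
            refine Finset.sum_congr rfl fun a _ => ?_
            rw [hpiagg, Finset.sum_mul]
        _ = ∑ m ∈ C, ∑ a, q' m * pinext m s a * (R s a + γ * ∑ s', Pbar s a s' * Vbar s') :=
            Finset.sum_comm
        _ = ∑ m ∈ C, q' m * ∑ a, pinext m s a * (R s a + γ * ∑ s', Pbar s a s' * Vbar s') := by
            refine Finset.sum_congr rfl fun m _ => ?_
            rw [Finset.mul_sum]
            exact Finset.sum_congr rfl fun a _ => by ring
    simp only [mul_sub]
    rw [Finset.sum_sub_distrib, ← Finset.sum_mul, hq'1, one_mul, h1]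
  refine supNorm_le' fun s => ?_
  simp only [hdecomp s]
  have step1 : |∑ m ∈ C, q' m * (Tpol γ R Pbar (pinext m) Vbar s - Topt γ R Pbar Vbar s)|
      ≤ ∑ m ∈ C, q' m * c m := by
    refine (Finset.abs_sum_le_sum_abs _ _).trans (Finset.sum_le_sum fun m hm => ?_)
    rw [abs_mul, abs_of_nonneg (hq'0 m)]
    exact mul_le_mul_of_nonneg_left (hmain s m hm) (hq'0 m)
  refine step1.trans (le_of_eq ?_)
  rw [← Finset.sum_add_distrib, ← Finset.sum_add_distrib]
  refine Finset.sum_congr rfl fun m _ => ?_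
  simp only [hcdef, hq'def]
  rw [mul_add, mul_add, Finset.mul_sum]
  congr 1
  · congr 1
    exact Finset.sum_congr rfl fun n _ => by ring
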